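/- Let λ < 0, n ≥ 2, c > 0, and suppose φ : [c, b) → (0, ∞) is C² with φ'' > (c + λ̃)·φ'·φ² and φ' > 0 on (c, b), where −λ < −λ̃ and c + λ̃ > 0. For ε > 0 small, set φ_ε(x) = M/√(b−ε−x) with M > 0 chosen so that φ(c) ≤ M/√(b−c) and 3/(2M²) ≤ c + λ̃. Then φ(x) ≤ φ_ε(x) for all x ∈ [c, b−ε). -/

import Mathlib

open Set Filter

private lemma hasDerivAt_rpow_aux (a p : ℝ) {x : ℝ} (hx : x < a) :
    HasDerivAt (fun y => (a - y) ^ p) (-p * (a - x) ^ (p - 1)) x := by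
  have h1 : HasDerivAt (fun y : ℝ => a - y) (-1) x := by
    simpa using (hasDerivAt_id x).const_sub a
  have h0 : a - x ≠ 0 := sub_ne_zero.mpr (ne_of_gt hx)
  have h2 := (Real.hasDerivAt_rpow_const (x := a - x) (p := p) (Or.inl h0)).comp x h1
  refine h2.congr_deriv ?_
  ring

set_option maxHeartbeats 1000000 in
theorem stmt_14 (lam lamt : ℝ) (hlam : lam < 0) (hlamt : -lam < -lamt)
    (c b : ℝ) (hc : 0 < c) (hcb : c < b) (hpos : 0 < c + lamt)
    (φ : ℝ → ℝ) (hφC2 : ContDiffOn ℝ 2 φ (Set.Ico c b))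
    (hφpos : ∀ x ∈ Set.Ico c b, 0 < φ x)
    (hφ' : ∀ x ∈ Set.Ioo c b, 0 < deriv φ x)
    (hφ'' : ∀ x ∈ Set.Ioo c b,
      (c + lamt) * deriv φ x * (φ x) ^ 2 < deriv (deriv φ) x)
    (M : ℝ) (hM : 0 < M) (hMc : φ c ≤ M / Real.sqrt (b - c))
    (hM2 : 3 / (2 * M ^ 2) ≤ c + lamt)
    (ε : ℝ) (hε : 0 < ε) (hεb : ε < b - c) :
    ∀ x ∈ Set.Ico c (b - ε), φ x ≤ M / Real.sqrt (b - ε - x) := by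
  set a := b - ε with ha
  have hca : c < a := by simp [ha]; linarith
  have hab : a < b := by simp [ha]; linarith
  -- the barrier in rpow form
  set ψ : ℝ → ℝ := fun x => M * (a - x) ^ (-(1/2) : ℝ) with hψdef
  have hψeq : ∀ x < a, M / Real.sqrt (a - x) = ψ x := by
    intro x hx
    have h0 : (0:ℝ) < a - x := by linarith
    simp only [hψdef]
    rw [Real.sqrt_eq_rpow, Real.rpow_neg h0.le, div_eq_mul_inv]
  -- goal in ψ form
  suffices H : ∀ x ∈ Set.Ico c a, φ x ≤ ψ x by
    intro x hx
    rw [hψeq x hx.2]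
    exact H x hx
  by_contra hcon
  push_neg at hcon
  obtain ⟨x₀, hx₀, hgt⟩ := hcon
  -- barrier derivatives
  set F1 : ℝ → ℝ := fun x => M * (1/2) * (a - x) ^ (-(3/2) : ℝ) with hF1def
  have hψ' : ∀ x < a, HasDerivAt ψ (F1 x) x := by
    intro x hx
    have := (hasDerivAt_rpow_aux a (-(1/2)) hx).const_mul M
    refine this.congr_deriv (Eq.symm ?_)
    rw [hF1def]
    norm_num
    ring
  have hF1' : ∀ x < a, HasDerivAt F1 (M * (3/4) * (a - x) ^ (-(5/2) : ℝ)) x := by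
    intro x hx
    have := (hasDerivAt_rpow_aux a (-(3/2)) hx).const_mul (M * (1/2))
    refine this.congr_deriv (Eq.symm ?_)
    norm_num
    ring
  -- φ derivative facts
  have hφIoo : ContDiffOn ℝ 2 φ (Set.Ioo c b) := hφC2.mono Set.Ioo_subset_Ico_self
  have hdφ : ∀ x ∈ Set.Ioo c b, HasDerivAt φ (deriv φ x) x := by
    intro x hx
    exact ((hφIoo.differentiableOn (by norm_num)).differentiableAt
      (isOpen_Ioo.mem_nhds hx)).hasDerivAt
  have hdφ2 : ContDiffOn ℝ 1 (deriv φ) (Set.Ioo c b) :=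
    hφIoo.deriv_of_isOpen isOpen_Ioo (by norm_num)
  have hddφ : ∀ x ∈ Set.Ioo c b, HasDerivAt (deriv φ) (deriv (deriv φ) x) x := by
    intro x hx
    exact ((hdφ2.differentiableOn (by norm_num)).differentiableAt
      (isOpen_Ioo.mem_nhds hx)).hasDerivAt
  -- g and its derivative g1
  set g : ℝ → ℝ := fun x => ψ x - φ x with hgdef
  set g1 : ℝ → ℝ := fun x => F1 x - deriv φ x with hg1def
  have hg' : ∀ x ∈ Set.Ioo c a, HasDerivAt g (g1 x) x := by
    intro x hx
    exact (hψ' x hx.2).sub (hdφ x ⟨hx.1, hx.2.trans hab⟩)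
  -- g c > 0
  have hgc : 0 < g c := by
    have h1 : (0:ℝ) < a - c := by linarith
    have h2 : Real.sqrt (a - c) < Real.sqrt (b - c) := by
      apply Real.sqrt_lt_sqrt h1.le
      simp [ha]; linarith
    have h3 : (0:ℝ) < Real.sqrt (a - c) := Real.sqrt_pos.mpr h1
    have h4 : M / Real.sqrt (b - c) < M / Real.sqrt (a - c) :=
      div_lt_div_of_pos_left hM h3 h2
    have := hψeq c hca
    simp only [hgdef]
    have : φ c < M / Real.sqrt (a - c) := lt_of_le_of_lt hMc h4
    rw [hψeq c hca] at this
    linarith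
  -- bound on φ on [c, a]
  obtain ⟨K, hK⟩ : ∃ K, ∀ x ∈ Set.Icc c a, φ x ≤ K := by
    obtain ⟨K, hK⟩ := (isCompact_Icc (a := c) (b := a)).exists_bound_of_continuousOn
      (hφC2.continuousOn.mono (Set.Icc_subset_Ico_right hab))
    exact ⟨K, fun x hx => (le_abs_self _).trans (by simpa using hK x hx)⟩
  have hKpos : 0 < K + 1 := by
    have := hφpos c ⟨le_refl c, hcb⟩
    have := hK c ⟨le_refl c, hca.le⟩
    linarith
  -- choose x₁ near a with g x₁ > 0
  set δ : ℝ := min ((a - x₀)/2) ((M/(K+1))^2/2) with hδdef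
  have hδpos : 0 < δ := by
    apply lt_min
    · have := hx₀.2; linarith
    · positivity
  set x₁ : ℝ := a - δ with hx₁def
  have hx₀x₁ : x₀ < x₁ := by
    have : δ ≤ (a - x₀)/2 := min_le_left _ _
    have := hx₀.2
    simp only [hx₁def]; linarith
  have hx₁a : x₁ < a := by simp only [hx₁def]; linarith
  have hcx₁ : c < x₁ := lt_of_le_of_lt hx₀.1 hx₀x₁
  have hgx₁ : 0 < g x₁ := by
    have hsd : Real.sqrt δ < M/(K+1) := by
      have h0' : (0:ℝ) < (M/(K+1))^2 := by positivity
      have h1 : δ < (M/(K+1))^2 := lt_of_le_of_lt (min_le_right _ _) (by linarith)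
      have := Real.sqrt_lt_sqrt hδpos.le h1
      rwa [Real.sqrt_sq (by positivity)] at this
    have hsdpos : 0 < Real.sqrt δ := Real.sqrt_pos.mpr hδpos
    have h2 : K + 1 < M / Real.sqrt δ := by
      rw [lt_div_iff₀ hsdpos]
      calc (K+1) * Real.sqrt δ < (K+1) * (M/(K+1)) := by
            exact mul_lt_mul_of_pos_left hsd hKpos
        _ = M := by field_simp
    have h3 : a - x₁ = δ := by simp [hx₁def]
    have h4 : φ x₁ ≤ K := hK x₁ ⟨hcx₁.le, hx₁a.le⟩
    have h5 := hψeq x₁ hx₁a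
    simp only [hgdef]
    rw [← h5, h3]
    linarith
  -- min of g on [c, x₁]
  obtain ⟨ξ, hξmem, hξmin⟩ := (isCompact_Icc (a := c) (b := x₁)).exists_isMinOn
    (Set.nonempty_Icc.mpr hcx₁.le)
    (by
      intro x hx
      have hxa : x ∈ Set.Ioo c a ∪ {c} := by
        rcases eq_or_lt_of_le hx.1 with h | h
        · right; simp [h.symm]
        · left; exact ⟨h, lt_of_le_of_lt hx.2 hx₁a⟩
      -- continuity of g on Icc c x₁
      have hψc : ContinuousWithinAt ψ (Set.Icc c x₁) x := by
        apply ContinuousWithinAt.mul continuousWithinAt_const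
        apply Real.continuousAt_rpow_const (a - x) _ (Or.inl (by
          have := hx.2; intro h; nlinarith [hx₁a])) |>.continuousWithinAt.comp
          ((continuousWithinAt_const.sub continuousWithinAt_id)) (fun y hy => Set.mem_univ _)
      have hφc : ContinuousWithinAt φ (Set.Icc c x₁) x :=
        (hφC2.continuousOn.mono (fun y hy => ⟨hy.1, lt_of_le_of_lt hy.2 (hx₁a.trans hab)⟩)) x hx
      exact hψc.sub hφc)
  have hgξneg : g ξ < 0 := by
    have := hξmin ⟨hx₀.1, hx₀x₁.le⟩
    simp only [hgdef] at *
    have hx0 : ψ x₀ - φ x₀ < 0 := by linarith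
    exact lt_of_le_of_lt this hx0
  have hξne_c : ξ ≠ c := fun h => by rw [h] at hgξneg; linarith
  have hξne_x₁ : ξ ≠ x₁ := fun h => by rw [h] at hgξneg; linarith
  have hξIoo : ξ ∈ Set.Ioo c x₁ :=
    ⟨lt_of_le_of_ne hξmem.1 (Ne.symm hξne_c), lt_of_le_of_ne hξmem.2 hξne_x₁⟩
  have hξa : ξ < a := hξIoo.2.trans hx₁a
  have hξIb : ξ ∈ Set.Ioo c b := ⟨hξIoo.1, hξa.trans hab⟩
  -- local min, first derivative zero
  have hloc : IsLocalMin g ξ := hξmin.isLocalMin (Icc_mem_nhds hξIoo.1 hξIoo.2)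
  have hg1ξ : g1 ξ = 0 := by
    have := hloc.deriv_eq_zero
    rwa [(hg' ξ ⟨hξIoo.1, hξa⟩).deriv] at this
  have hderivφξ : deriv φ ξ = F1 ξ := by
    simp only [hg1def] at hg1ξ; linarith
  -- second derivative of g at ξ is negative
  set u : ℝ := a - ξ with hudef
  have hu : 0 < u := by simp only [hudef]; linarith
  set v : ℝ := u ^ (-(1/2) : ℝ) with hvdef
  have hv : 0 < v := Real.rpow_pos_of_pos hu _
  have hv3 : u ^ (-(3/2) : ℝ) = v ^ 3 := by
    rw [hvdef, ← Real.rpow_natCast (u ^ (-(1/2):ℝ)) 3, ← Real.rpow_mul hu.le]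
    norm_num
  have hv5 : u ^ (-(5/2) : ℝ) = v ^ 5 := by
    rw [hvdef, ← Real.rpow_natCast (u ^ (-(1/2):ℝ)) 5, ← Real.rpow_mul hu.le]
    norm_num
  have hψξ : ψ ξ = M * v := by rw [hψdef]
  have hF1ξ : F1 ξ = M * (1/2) * v ^ 3 := by rw [hF1def, ← hv3]
  have hψξpos : 0 < ψ ξ := by rw [hψξ]; positivity
  have hφξ : ψ ξ < φ ξ := by
    simp only [hgdef] at hgξneg; linarith
  have hB : M * (3/4) * (a - ξ) ^ (-(5/2) : ℝ) - deriv (deriv φ) ξ < 0 := by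
    have h1 := hφ'' ξ hξIb
    have h2 : M * (3/4) * u ^ (-(5/2):ℝ) ≤ (c + lamt) * F1 ξ * (ψ ξ)^2 := by
      rw [hv5, hF1ξ, hψξ]
      have hMne : (M:ℝ) ≠ 0 := ne_of_gt hM
      have key : 3 / (2 * M^2) * (M^3 * v^5 / 2) = M * (3/4) * v^5 := by
        field_simp; ring
      have h3 : 3 / (2 * M^2) * (M^3 * v^5 / 2) ≤ (c + lamt) * (M^3 * v^5 / 2) :=
        mul_le_mul_of_nonneg_right hM2 (by positivity)
      calc M * (3/4) * v^5 = 3 / (2 * M^2) * (M^3 * v^5 / 2) := key.symm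
        _ ≤ (c + lamt) * (M^3 * v^5 / 2) := h3
        _ = (c + lamt) * (M * (1/2) * v^3) * (M * v)^2 := by ring
    have h4 : (c + lamt) * F1 ξ * (ψ ξ)^2 < (c + lamt) * deriv φ ξ * (φ ξ)^2 := by
      rw [hderivφξ]
      have hF1pos : 0 < F1 ξ := by rw [hF1ξ]; positivity
      have : (ψ ξ)^2 < (φ ξ)^2 := by nlinarith
      nlinarith [mul_pos hpos hF1pos]
    have : u = a - ξ := rfl
    rw [← this]
    linarith
  -- g1 has derivative < 0 at ξ, and g1 ξ = 0 ⇒ g1 < 0 just right of ξ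
  have hg1' : HasDerivAt g1 (M * (3/4) * (a - ξ) ^ (-(5/2) : ℝ) - deriv (deriv φ) ξ) ξ :=
    (hF1' ξ hξa).sub (hddφ ξ hξIb)
  have hslope := hasDerivAt_iff_tendsto_slope.mp hg1'
  have hev : ∀ᶠ x in nhdsWithin ξ {ξ}ᶜ, slope g1 ξ x < 0 :=
    hslope.eventually_lt_const hB
  have hmono : nhdsWithin ξ (Set.Ioi ξ) ≤ nhdsWithin ξ {ξ}ᶜ :=
    nhdsWithin_mono ξ (fun x hx => ne_of_gt hx)
  have hev2 : ∀ᶠ x in nhdsWithin ξ (Set.Ioi ξ), g1 x < 0 := by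
    filter_upwards [hmono hev, self_mem_nhdsWithin] with x hx hx'
    have hxξ : ξ < x := hx'
    have hs : slope g1 ξ x = g1 x / (x - ξ) := by
      rw [slope_def_field, hg1ξ]; rw [div_eq_div_iff] <;> ring_nf <;> nlinarith
    rw [hs] at hx
    have := div_neg_iff.mp hx
    rcases this with ⟨h1, h2⟩ | ⟨h1, h2⟩
    · linarith
    · exact h1
  have hev3 : ∀ᶠ x in nhdsWithin ξ (Set.Ioi ξ), g1 x < 0 ∧ x < x₁ := by
    filter_upwards [hev2, mem_nhdsWithin_of_mem_nhds (Iio_mem_nhds hξIoo.2)] with x h1 h2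
    exact ⟨h1, h2⟩
  obtain ⟨w, hw, hsub⟩ := mem_nhdsGT_iff_exists_Ioo_subset.mp hev3
  set m : ℝ := (ξ + min w x₁) / 2 with hmdef
  have hwξ : ξ < w := hw
  have hmin' : ξ < min w x₁ := lt_min hwξ hξIoo.2
  have hmξ : ξ < m := by simp only [hmdef]; linarith
  have hmw : m < w := by
    have h1 : min w x₁ ≤ w := min_le_left _ _
    simp only [hmdef]; linarith
  have hmx₁ : m < x₁ := by
    have h1 : min w x₁ ≤ x₁ := min_le_right _ _
    simp only [hmdef]; linarith
  have hIccsub : Set.Icc ξ m ⊆ Set.Ioo c a :=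
    fun y hy => ⟨lt_of_lt_of_le hξIoo.1 hy.1, lt_of_le_of_lt hy.2 (hmx₁.trans hx₁a)⟩
  have hanti : StrictAntiOn g (Set.Icc ξ m) := by
    apply strictAntiOn_of_deriv_neg (convex_Icc ξ m)
    · intro y hy
      exact (hg' y (hIccsub hy)).continuousAt.continuousWithinAt
    · intro y hy
      rw [interior_Icc] at hy
      rw [(hg' y (hIccsub (Set.Ioo_subset_Icc_self hy))).deriv]
      exact (hsub ⟨hy.1, hy.2.trans hmw⟩).1
  have hgm : g m < g ξ :=
    hanti (Set.left_mem_Icc.mpr hmξ.le) (Set.right_mem_Icc.mpr hmξ.le) hmξ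
  have : g ξ ≤ g m := hξmin ⟨(hξIoo.1.trans hmξ).le, hmx₁.le⟩
  linarith
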